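/- With the above notation, let p and j be positive integers with gcd(p, j) = 1. Then Γ(jθ/p) ≤ T ∑_{q∈ℤ, q≠0} λ_{qj} |c_{qp}|² + 2θ‖c‖₁²/π + 2(2N+1) j² θ² ‖c‖₁² / (π² T). -/

import Mathlib

/-- The Fourier transform of the indicator function of `[-1/2, 1/2]`:
`φ̂(x) = sin(πx)/(πx)` for `x ≠ 0` and `φ̂(0) = 1`. -/
noncomputable def phihat (x : ℝ) : ℝ :=
  if x = 0 then 1 else Real.sin (Real.pi * x) / (Real.pi * x)

lemma phihat_zero : phihat 0 = 1 := by simp [phihat]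

lemma abs_phihat_le_one (x : ℝ) : |phihat x| ≤ 1 := by
  unfold phihat
  split_ifs with h
  · norm_num
  · rw [abs_div]
    have h0 : 0 < |Real.pi * x| := abs_pos.2 (mul_ne_zero Real.pi_ne_zero h)
    rw [div_le_one h0]
    exact Real.abs_sin_le_abs

lemma abs_phihat_le_inv (x : ℝ) (hx : x ≠ 0) : |phihat x| ≤ 1 / (Real.pi * |x|) := by
  unfold phihat
  rw [if_neg hx, abs_div, abs_mul, abs_of_pos Real.pi_pos]
  have h1 : |Real.sin (Real.pi * x)| ≤ 1 := abs_le.2 ⟨Real.neg_one_le_sin _, Real.sin_le_one _⟩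
  gcongr

lemma arg_eq (T θ : ℝ) (hθ : θ ≠ 0) (p j : ℕ) (hp : (p:ℝ) ≠ 0) (hj : (j:ℝ) ≠ 0) (k l : ℤ) :
    (T / θ) * ((l : ℝ) - (k : ℝ) * θ / ((j : ℝ) * θ / p))
      = T * (((j:ℤ) * l - k * p : ℤ) : ℝ) / (θ * j) := by
  push_cast
  field_simp

lemma phihat_arg_bound (T θ : ℝ) (hT : 0 < T) (hθ : 0 < θ) (p j : ℕ) (hp : 0 < p)
    (hj : 0 < j) (k l : ℤ) (hd : (j:ℤ) * l - k * p ≠ 0) :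
    |phihat ((T / θ) * ((l : ℝ) - (k : ℝ) * θ / ((j : ℝ) * θ / p)))|
      ≤ (j:ℝ) * θ / (Real.pi * T * |(((j:ℤ) * l - k * p : ℤ) : ℝ)|) := by
  have hjR : (0:ℝ) < j := by exact_mod_cast hj
  have hpR : (0:ℝ) < p := by exact_mod_cast hp
  have hdR : (((j:ℤ) * l - k * p : ℤ) : ℝ) ≠ 0 := Int.cast_ne_zero.2 hd
  rw [arg_eq T θ hθ.ne' p j hpR.ne' hjR.ne' k l]
  have hx : T * (((j:ℤ) * l - k * p : ℤ) : ℝ) / (θ * (j:ℝ)) ≠ 0 :=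
    div_ne_zero (mul_ne_zero hT.ne' hdR) (mul_ne_zero hθ.ne' hjR.ne')
  refine (abs_phihat_le_inv _ hx).trans_eq ?_
  rw [abs_div, abs_mul, abs_of_pos hT, abs_mul, abs_of_pos hθ, abs_of_pos hjR]
  have habs : |(((j:ℤ) * l - k * p : ℤ) : ℝ)| ≠ 0 := abs_ne_zero.2 hdR
  field_simp

lemma summable_inner (T θ : ℝ) (c : ℤ → ℂ) (hc : Summable fun l : ℤ => ‖c l‖)
    (p j : ℕ) (k : ℤ) :
    Summable fun l : ℤ =>
      c l * (phihat ((T / θ) * ((l : ℝ) - (k : ℝ) * θ / ((j : ℝ) * θ / p))) : ℂ) := by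
  refine Summable.of_norm_bounded hc fun l => ?_
  rw [norm_mul, Complex.norm_real, Real.norm_eq_abs]
  exact mul_le_of_le_one_right (norm_nonneg _) (abs_phihat_le_one _)

/-- Case of a multiple of `j`. -/
lemma aux_mul (T θ : ℝ) (hT : 0 < T) (hθ : 0 < θ) (c : ℤ → ℂ)
    (hc : Summable fun l : ℤ => ‖c l‖) (p j : ℕ) (hp : 0 < p) (hj : 0 < j) (q : ℤ) :
    ‖(∑' l : ℤ, c l *
        (phihat ((T / θ) * ((l : ℝ) - ((q * (j:ℤ) : ℤ) : ℝ) * θ / ((j : ℝ) * θ / p))) : ℂ))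
      - c (q * p)‖ ≤ θ * (∑' l : ℤ, ‖c l‖) / (Real.pi * T) := by
  classical
  have hπ := Real.pi_pos
  have hjR : (0:ℝ) < j := by exact_mod_cast hj
  have hpR : (0:ℝ) < p := by exact_mod_cast hp
  have hsum := summable_inner T θ c hc p j (q * (j:ℤ))
  rw [Summable.tsum_eq_add_tsum_ite hsum (q * (p:ℤ))]
  have h0 : (T / θ) * ((((q * (p:ℤ)) : ℤ) : ℝ) - ((q * (j:ℤ) : ℤ) : ℝ) * θ / ((j : ℝ) * θ / p)) = 0 := by
    rw [arg_eq T θ hθ.ne' p j hpR.ne' hjR.ne']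
    have : ((j:ℤ) * (q * p) - q * j * p : ℤ) = 0 := by ring
    rw [this]
    simp
  rw [h0, phihat_zero]
  simp only [Complex.ofReal_one, mul_one, add_sub_cancel_left]
  -- now bound the tail
  have hbound : ∀ l : ℤ,
      ‖if l = q * (p:ℤ) then 0 else c l *
        (phihat ((T / θ) * ((l : ℝ) - ((q * (j:ℤ) : ℤ) : ℝ) * θ / ((j : ℝ) * θ / p))) : ℂ)‖
        ≤ ‖c l‖ * (θ / (Real.pi * T)) := by
    intro l
    split_ifs with hl
    · simp
      positivity
    · have hd : (j:ℤ) * l - (q * j) * p ≠ 0 := by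
        intro h
        apply hl
        have : (j:ℤ) * l = (j:ℤ) * (q * p) := by linarith [h]
        exact mul_left_cancel₀ (by exact_mod_cast hj.ne' : (j:ℤ) ≠ 0) this
      rw [norm_mul, Complex.norm_real, Real.norm_eq_abs]
      have h1 := phihat_arg_bound T θ hT hθ p j hp hj (q * j) l hd
      have h2 : (j:ℝ) ≤ |(((j:ℤ) * l - (q * j) * p : ℤ) : ℝ)| := by
        have : ((j:ℤ) * l - (q * j) * p : ℤ) = (j:ℤ) * (l - q * p) := by ring
        rw [this]
        push_cast
        rw [abs_mul, abs_of_pos hjR]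
        have : (1:ℝ) ≤ |((l : ℝ) - (q:ℝ) * p)| := by
          have hz : l - q * (p:ℤ) ≠ 0 := sub_ne_zero.2 hl
          have := Int.one_le_abs hz
          calc (1:ℝ) ≤ ((|l - q * (p:ℤ)| : ℤ) : ℝ) := by exact_mod_cast this
            _ = |((l : ℝ) - (q:ℝ) * p)| := by push_cast; ring_nf
        nlinarith
      have h3 : (j:ℝ) * θ / (Real.pi * T * |(((j:ℤ) * l - (q * j) * p : ℤ) : ℝ)|)
          ≤ θ / (Real.pi * T) := by
        rw [div_le_div_iff₀ (by positivity) (by positivity)]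
        nlinarith [mul_le_mul_of_nonneg_left h2 (by positivity : (0:ℝ) ≤ θ * (Real.pi * T))]
      calc ‖c l‖ * |phihat _| ≤ ‖c l‖ * ((j:ℝ) * θ / (Real.pi * T * |(((j:ℤ) * l - (q * j) * p : ℤ) : ℝ)|)) :=
            mul_le_mul_of_nonneg_left h1 (norm_nonneg _)
        _ ≤ ‖c l‖ * (θ / (Real.pi * T)) := mul_le_mul_of_nonneg_left h3 (norm_nonneg _)
  have hsb : Summable fun l : ℤ => ‖c l‖ * (θ / (Real.pi * T)) := hc.mul_right _
  have hsn : Summable fun l : ℤ =>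
      ‖if l = q * (p:ℤ) then 0 else c l *
        (phihat ((T / θ) * ((l : ℝ) - ((q * (j:ℤ) : ℤ) : ℝ) * θ / ((j : ℝ) * θ / p))) : ℂ)‖ :=
    Summable.of_nonneg_of_le (fun _ => norm_nonneg _) hbound hsb
  calc ‖∑' l : ℤ, if l = q * (p:ℤ) then 0 else c l *
        (phihat ((T / θ) * ((l : ℝ) - ((q * (j:ℤ) : ℤ) : ℝ) * θ / ((j : ℝ) * θ / p))) : ℂ)‖
      ≤ ∑' l : ℤ, ‖if l = q * (p:ℤ) then 0 else c l *
        (phihat ((T / θ) * ((l : ℝ) - ((q * (j:ℤ) : ℤ) : ℝ) * θ / ((j : ℝ) * θ / p))) : ℂ)‖ :=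
        norm_tsum_le_tsum_norm hsn
    _ ≤ ∑' l : ℤ, ‖c l‖ * (θ / (Real.pi * T)) := Summable.tsum_le_tsum hbound hsn hsb
    _ = (∑' l : ℤ, ‖c l‖) * (θ / (Real.pi * T)) := tsum_mul_right
    _ = θ * (∑' l : ℤ, ‖c l‖) / (Real.pi * T) := by ring

/-- Case of a non-multiple of `j`. -/
lemma aux_nonmul (T θ : ℝ) (hT : 0 < T) (hθ : 0 < θ) (c : ℤ → ℂ)
    (hc : Summable fun l : ℤ => ‖c l‖) (p j : ℕ) (hp : 0 < p) (hj : 0 < j)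
    (hpj : Nat.gcd p j = 1) (k : ℤ) (hk : ¬ (j:ℤ) ∣ k) :
    ‖∑' l : ℤ, c l *
        (phihat ((T / θ) * ((l : ℝ) - (k : ℝ) * θ / ((j : ℝ) * θ / p))) : ℂ)‖
      ≤ (j:ℝ) * θ * (∑' l : ℤ, ‖c l‖) / (Real.pi * T) := by
  have hπ := Real.pi_pos
  have hjR : (0:ℝ) < j := by exact_mod_cast hj
  have hbound : ∀ l : ℤ,
      ‖c l * (phihat ((T / θ) * ((l : ℝ) - (k : ℝ) * θ / ((j : ℝ) * θ / p))) : ℂ)‖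
        ≤ ‖c l‖ * ((j:ℝ) * θ / (Real.pi * T)) := by
    intro l
    have hd : (j:ℤ) * l - k * p ≠ 0 := by
      intro h
      apply hk
      have hdvd : (j:ℤ) ∣ k * p := ⟨l, by linarith [h]⟩
      have hcop : Int.gcd (j:ℤ) (p:ℤ) = 1 := by
        rw [Int.gcd_natCast_natCast, Nat.gcd_comm]
        exact hpj
      exact Int.dvd_of_dvd_mul_left_of_gcd_one hdvd hcop
    rw [norm_mul, Complex.norm_real, Real.norm_eq_abs]
    have h1 := phihat_arg_bound T θ hT hθ p j hp hj k l hd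
    have h2 : (1:ℝ) ≤ |(((j:ℤ) * l - k * p : ℤ) : ℝ)| := by
      have := Int.one_le_abs hd
      calc (1:ℝ) ≤ ((|(j:ℤ) * l - k * p| : ℤ) : ℝ) := by exact_mod_cast this
        _ = |(((j:ℤ) * l - k * p : ℤ) : ℝ)| := by rw [Int.cast_abs]
    have h3 : (j:ℝ) * θ / (Real.pi * T * |(((j:ℤ) * l - k * p : ℤ) : ℝ)|)
        ≤ (j:ℝ) * θ / (Real.pi * T) := by
      rw [div_le_div_iff₀ (by positivity) (by positivity)]
      nlinarith [mul_le_mul_of_nonneg_left h2 (by positivity : (0:ℝ) ≤ (j:ℝ) * θ * (Real.pi * T))]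
    calc ‖c l‖ * |phihat _| ≤ ‖c l‖ * ((j:ℝ) * θ / (Real.pi * T * |(((j:ℤ) * l - k * p : ℤ) : ℝ)|)) :=
          mul_le_mul_of_nonneg_left h1 (norm_nonneg _)
      _ ≤ ‖c l‖ * ((j:ℝ) * θ / (Real.pi * T)) := mul_le_mul_of_nonneg_left h3 (norm_nonneg _)
  have hsb : Summable fun l : ℤ => ‖c l‖ * ((j:ℝ) * θ / (Real.pi * T)) := hc.mul_right _
  have hsn : Summable fun l : ℤ =>
      ‖c l * (phihat ((T / θ) * ((l : ℝ) - (k : ℝ) * θ / ((j : ℝ) * θ / p))) : ℂ)‖ :=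
    Summable.of_nonneg_of_le (fun _ => norm_nonneg _) hbound hsb
  calc ‖∑' l : ℤ, c l * (phihat ((T / θ) * ((l : ℝ) - (k : ℝ) * θ / ((j : ℝ) * θ / p))) : ℂ)‖
      ≤ ∑' l : ℤ, ‖c l * (phihat ((T / θ) * ((l : ℝ) - (k : ℝ) * θ / ((j : ℝ) * θ / p))) : ℂ)‖ :=
        norm_tsum_le_tsum_norm hsn
    _ ≤ ∑' l : ℤ, ‖c l‖ * ((j:ℝ) * θ / (Real.pi * T)) := Summable.tsum_le_tsum hbound hsn hsb
    _ = (∑' l : ℤ, ‖c l‖) * ((j:ℝ) * θ / (Real.pi * T)) := tsum_mul_right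
    _ = (j:ℝ) * θ * (∑' l : ℤ, ‖c l‖) / (Real.pi * T) := by ring

lemma aux_arith (x y A B L : ℝ) (hx : 0 ≤ x) (hy : 0 ≤ y) (hA : 0 ≤ A) (hB : 0 ≤ B)
    (hAB : A ≤ B) (hL0 : 0 ≤ L) (hxy : x ≤ y + A) :
    L * x ^ 2 ≤ L * y ^ 2 + L * (2 * y * A) + L * B ^ 2 := by
  have h1 : x ^ 2 ≤ y ^ 2 + 2 * y * A + B ^ 2 := by
    nlinarith [mul_le_mul hxy hxy hx (by linarith : (0:ℝ) ≤ y + A), mul_le_mul hAB hAB hA hB]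
  calc L * x ^ 2 ≤ L * (y ^ 2 + 2 * y * A + B ^ 2) := mul_le_mul_of_nonneg_left h1 hL0
    _ = L * y ^ 2 + L * (2 * y * A) + L * B ^ 2 := by ring

lemma aux_arith2 (x B L : ℝ) (hx : 0 ≤ x) (hL0 : 0 ≤ L) (hxB : x ≤ B) :
    L * x ^ 2 ≤ 0 + 0 + L * B ^ 2 := by
  have h1 : x ^ 2 ≤ B ^ 2 := by nlinarith
  calc L * x ^ 2 ≤ L * B ^ 2 := mul_le_mul_of_nonneg_left h1 hL0
    _ = 0 + 0 + L * B ^ 2 := by ring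

set_option maxHeartbeats 2000000 in
/-- With `a_{k,l}(τ) = (T/θ)(l - kθ/τ)` and
`Γ(τ) = T ∑_k λ_k |∑_l c_l φ̂(a_{k,l}(τ))|²`: for positive coprime integers `p`, `j`,
`Γ(jθ/p) ≤ T ∑_{q ≠ 0} λ_{qj} |c_{qp}|² + 2θ‖c‖₁²/π + 2(2N+1) j² θ² ‖c‖₁²/(π²T)`. -/
theorem stmt_5 (T θ : ℝ) (hT : 0 < T) (hθ : 0 < θ)
    (c : ℤ → ℂ) (hc : Summable fun l : ℤ => ‖c l‖)
    (N : ℕ) (hN : 0 < N) (lam : ℤ → ℝ)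
    (hlam0 : lam 0 = 0) (hsym : ∀ k : ℤ, lam (-k) = lam k)
    (hrange : ∀ k : ℤ, 0 ≤ lam k ∧ lam k ≤ 1)
    (hsupp : ∀ k : ℤ, (N : ℤ) < |k| → lam k = 0)
    (p j : ℕ) (hp : 0 < p) (hj : 0 < j) (hpj : Nat.gcd p j = 1) :
    T * (∑' k : ℤ, lam k *
        ‖∑' l : ℤ, c l *
          (phihat ((T / θ) * ((l : ℝ) - (k : ℝ) * θ / ((j : ℝ) * θ / p))) : ℂ)‖ ^ 2)
      ≤ T * (∑' q : {q : ℤ // q ≠ 0}, lam ((q : ℤ) * j) * ‖c ((q : ℤ) * p)‖ ^ 2)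
        + 2 * θ * (∑' l : ℤ, ‖c l‖) ^ 2 / Real.pi
        + 2 * (2 * N + 1) * (j : ℝ) ^ 2 * θ ^ 2 * (∑' l : ℤ, ‖c l‖) ^ 2
            / (Real.pi ^ 2 * T) := by
  classical
  have hπ := Real.pi_pos
  have hjR : (0:ℝ) < (j:ℝ) := by exact_mod_cast hj
  have hpR : (0:ℝ) < (p:ℝ) := by exact_mod_cast hp
  have hjZ : (j:ℤ) ≠ 0 := by exact_mod_cast hj.ne'
  have hpZ : (p:ℤ) ≠ 0 := by exact_mod_cast hp.ne'
  set C := ∑' l : ℤ, ‖c l‖ with hCdef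
  have hC0 : 0 ≤ C := tsum_nonneg fun _ => norm_nonneg _
  set A := θ * C / (Real.pi * T) with hAdef
  set B := (j:ℝ) * θ * C / (Real.pi * T) with hBdef
  have hA0 : 0 ≤ A := by rw [hAdef]; positivity
  have hB0 : 0 ≤ B := by rw [hBdef]; positivity
  have hAB : A ≤ B := by
    rw [hAdef, hBdef]
    have h1 : (1:ℝ) ≤ (j:ℝ) := by exact_mod_cast hj
    gcongr
    nlinarith
  set f : ℤ → ℝ := fun k => if (j:ℤ) ∣ k then lam k * ‖c (k / j * p)‖ ^ 2 else 0 with hfdef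
  set g : ℤ → ℝ := fun k => if (j:ℤ) ∣ k then lam k * (2 * ‖c (k / j * p)‖ * A) else 0 with hgdef
  -- pointwise bound
  have key : ∀ k : ℤ, lam k *
      ‖∑' l : ℤ, c l *
        (phihat ((T / θ) * ((l : ℝ) - (k : ℝ) * θ / ((j : ℝ) * θ / p))) : ℂ)‖ ^ 2
      ≤ f k + g k + lam k * B ^ 2 := by
    intro k
    by_cases hdvd : (j:ℤ) ∣ k
    · obtain ⟨q, hq⟩ := hdvd
      have hq' : k = q * (j:ℤ) := by rw [hq]; ring
      subst hq'
      have hdvd' : (j:ℤ) ∣ q * (j:ℤ) := dvd_mul_left _ _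
      have hquot : q * (j:ℤ) / (j:ℤ) = q := Int.mul_ediv_cancel _ hjZ
      simp only [hfdef, hgdef, if_pos hdvd', hquot]
      have h1 := aux_mul T θ hT hθ c hc p j hp hj q
      have h2 : ‖∑' l : ℤ, c l *
          (phihat ((T / θ) * ((l : ℝ) - ((q * (j:ℤ) : ℤ) : ℝ) * θ / ((j : ℝ) * θ / p))) : ℂ)‖
          ≤ ‖c (q * p)‖ + A := by
        have h3 := norm_sub_norm_le (∑' l : ℤ, c l *
          (phihat ((T / θ) * ((l : ℝ) - ((q * (j:ℤ) : ℤ) : ℝ) * θ / ((j : ℝ) * θ / p))) : ℂ))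
          (c (q * p))
        rw [hAdef, hCdef]
        linarith
      exact aux_arith _ _ _ _ _ (norm_nonneg _) (norm_nonneg _) hA0 hB0 hAB
        (hrange _).1 h2
    · simp only [hfdef, hgdef, if_neg hdvd]
      have h1 := aux_nonmul T θ hT hθ c hc p j hp hj hpj k hdvd
      have h2 : ‖∑' l : ℤ, c l *
          (phihat ((T / θ) * ((l : ℝ) - (k : ℝ) * θ / ((j : ℝ) * θ / p))) : ℂ)‖ ≤ B := by
        rw [hBdef, hCdef]; exact h1
      exact aux_arith2 _ _ _ (norm_nonneg _) (hrange k).1 h2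
  -- finite support
  set s : Finset ℤ := Finset.Icc (-(N:ℤ)) (N:ℤ) with hsdef
  have hIcc : ∀ k : ℤ, k ∉ s → lam k = 0 := by
    intro k hk
    apply hsupp
    rw [hsdef, Finset.mem_Icc] at hk
    rcases abs_cases k with ⟨h, _⟩ | ⟨h, _⟩ <;> omega
  have hsumF : Summable fun k : ℤ => lam k *
      ‖∑' l : ℤ, c l *
        (phihat ((T / θ) * ((l : ℝ) - (k : ℝ) * θ / ((j : ℝ) * θ / p))) : ℂ)‖ ^ 2 :=
    summable_of_ne_finset_zero (s := s) fun k hk => by rw [hIcc k hk, zero_mul]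
  have hsumf : Summable f :=
    summable_of_ne_finset_zero (s := s) fun k hk => by
      simp only [hfdef]; split_ifs <;> simp [hIcc k hk]
  have hsumg : Summable g :=
    summable_of_ne_finset_zero (s := s) fun k hk => by
      simp only [hgdef]; split_ifs <;> simp [hIcc k hk]
  have hsumh : Summable fun k : ℤ => lam k * B ^ 2 :=
    summable_of_ne_finset_zero (s := s) fun k hk => by rw [hIcc k hk, zero_mul]
  have hmainsum : (∑' k : ℤ, lam k *
      ‖∑' l : ℤ, c l *
        (phihat ((T / θ) * ((l : ℝ) - (k : ℝ) * θ / ((j : ℝ) * θ / p))) : ℂ)‖ ^ 2)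
      ≤ (∑' k : ℤ, f k) + (∑' k : ℤ, g k) + (∑' k : ℤ, lam k * B ^ 2) := by
    calc (∑' k : ℤ, lam k *
        ‖∑' l : ℤ, c l *
          (phihat ((T / θ) * ((l : ℝ) - (k : ℝ) * θ / ((j : ℝ) * θ / p))) : ℂ)‖ ^ 2)
        ≤ ∑' k : ℤ, (f k + g k + lam k * B ^ 2) :=
          Summable.tsum_le_tsum key hsumF ((hsumf.add hsumg).add hsumh)
      _ = (∑' k : ℤ, f k) + (∑' k : ℤ, g k) + (∑' k : ℤ, lam k * B ^ 2) := by
          rw [Summable.tsum_add (hsumf.add hsumg) hsumh, Summable.tsum_add hsumf hsumg]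
  -- injectivity maps
  have hinjj : Function.Injective (fun q : ℤ => q * (j:ℤ)) :=
    fun a b h => mul_right_cancel₀ hjZ h
  have hinjp : Function.Injective (fun q : ℤ => q * (p:ℤ)) :=
    fun a b h => mul_right_cancel₀ hpZ h
  -- (a) evaluate sum of f
  have hfa : (∑' k : ℤ, f k)
      = ∑' q : {q : ℤ // q ≠ 0}, lam ((q : ℤ) * j) * ‖c ((q : ℤ) * p)‖ ^ 2 := by
    have hinj : Function.Injective (fun q : {q : ℤ // q ≠ 0} => (q : ℤ) * (j:ℤ)) :=
      fun a b h => Subtype.ext (mul_right_cancel₀ hjZ h)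
    have hrng : Function.support f ⊆ Set.range (fun q : {q : ℤ // q ≠ 0} => (q : ℤ) * (j:ℤ)) := by
      intro k hk
      simp only [Function.mem_support, hfdef] at hk
      by_cases hdvd : (j:ℤ) ∣ k
      · rw [if_pos hdvd] at hk
        have hlamne : lam k ≠ 0 := by
          intro h0; apply hk; rw [h0, zero_mul]
        have hkne : k ≠ 0 := by
          intro h0; apply hlamne; rw [h0]; exact hlam0
        have hqne : k / (j:ℤ) ≠ 0 := by
          intro h0
          apply hkne
          have := Int.ediv_mul_cancel hdvd
          rw [h0, zero_mul] at this
          exact this.symm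
        exact ⟨⟨k / (j:ℤ), hqne⟩, Int.ediv_mul_cancel hdvd⟩
      · rw [if_neg hdvd] at hk; exact absurd rfl hk
    rw [← Function.Injective.tsum_eq hinj hrng]
    apply tsum_congr
    intro q
    simp only [hfdef, if_pos (dvd_mul_left (j:ℤ) (q:ℤ)), Int.mul_ediv_cancel _ hjZ]
  -- (b) bound sum of g
  have hgb : (∑' k : ℤ, g k) ≤ 2 * A * C := by
    have hrng : Function.support g ⊆ Set.range (fun q : ℤ => q * (j:ℤ)) := by
      intro k hk
      simp only [Function.mem_support, hgdef] at hk
      by_cases hdvd : (j:ℤ) ∣ k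
      · exact ⟨k / (j:ℤ), Int.ediv_mul_cancel hdvd⟩
      · rw [if_neg hdvd] at hk; exact absurd rfl hk
    have h1 : (∑' k : ℤ, g k) = ∑' q : ℤ, lam (q * j) * (2 * ‖c (q * p)‖ * A) := by
      rw [← Function.Injective.tsum_eq hinjj hrng]
      apply tsum_congr
      intro q
      simp only [hgdef, if_pos (dvd_mul_left (j:ℤ) q), Int.mul_ediv_cancel _ hjZ]
    rw [h1]
    have hsump : Summable fun q : ℤ => ‖c (q * (p:ℤ))‖ := hc.comp_injective hinjp
    have hpt : ∀ q : ℤ, lam (q * j) * (2 * ‖c (q * p)‖ * A) ≤ 2 * A * ‖c (q * (p:ℤ))‖ := by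
      intro q
      obtain ⟨hl0, hl1⟩ := hrange (q * j)
      nlinarith [norm_nonneg (c (q * (p:ℤ))), hA0,
        mul_le_mul_of_nonneg_right hl1 (by positivity : (0:ℝ) ≤ 2 * ‖c (q * (p:ℤ))‖ * A)]
    have hsleft : Summable fun q : ℤ => lam (q * j) * (2 * ‖c (q * p)‖ * A) := by
      refine Summable.of_nonneg_of_le (fun q => ?_) hpt (hsump.mul_left (2 * A))
      obtain ⟨hl0, _⟩ := hrange (q * j)
      positivity
    calc (∑' q : ℤ, lam (q * j) * (2 * ‖c (q * p)‖ * A))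
        ≤ ∑' q : ℤ, 2 * A * ‖c (q * (p:ℤ))‖ :=
          Summable.tsum_le_tsum hpt hsleft (hsump.mul_left (2 * A))
      _ = 2 * A * ∑' q : ℤ, ‖c (q * (p:ℤ))‖ := tsum_mul_left
      _ ≤ 2 * A * C := by
          refine mul_le_mul_of_nonneg_left ?_ (by positivity)
          rw [hCdef]
          exact Summable.tsum_le_tsum_of_inj (fun q : ℤ => q * (p:ℤ)) hinjp
            (fun _ _ => norm_nonneg _) (fun q => le_rfl) hsump hc
  -- (c) bound the lam-sum
  have hcard : (s.card : ℝ) = 2 * (N:ℝ) + 1 := by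
    have : s.card = 2 * N + 1 := by
      rw [hsdef, Int.card_Icc]
      omega
    rw [this]; push_cast; ring
  have hlamsum : (∑' k : ℤ, lam k) ≤ 2 * (N:ℝ) + 1 := by
    rw [tsum_eq_sum hIcc]
    calc ∑ k ∈ s, lam k ≤ ∑ k ∈ s, (1:ℝ) := Finset.sum_le_sum fun i _ => (hrange i).2
      _ = (s.card : ℝ) := by simp
      _ = 2 * (N:ℝ) + 1 := hcard
  have hhc : (∑' k : ℤ, lam k * B ^ 2) ≤ (2 * (N:ℝ) + 1) * B ^ 2 := by
    rw [tsum_mul_right]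
    exact mul_le_mul_of_nonneg_right hlamsum (by positivity)
  -- assemble
  have hmain2 : (∑' k : ℤ, lam k *
      ‖∑' l : ℤ, c l *
        (phihat ((T / θ) * ((l : ℝ) - (k : ℝ) * θ / ((j : ℝ) * θ / p))) : ℂ)‖ ^ 2)
      ≤ (∑' q : {q : ℤ // q ≠ 0}, lam ((q : ℤ) * j) * ‖c ((q : ℤ) * p)‖ ^ 2)
        + 2 * A * C + (2 * (N:ℝ) + 1) * B ^ 2 := by
    rw [← hfa]
    linarith [hmainsum, hgb, hhc]
  have e1 : T * (2 * A * C) = 2 * θ * C ^ 2 / Real.pi := by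
    rw [hAdef]
    field_simp
  have e2 : T * ((2 * (N:ℝ) + 1) * B ^ 2)
      = (2 * (N:ℝ) + 1) * (j:ℝ) ^ 2 * θ ^ 2 * C ^ 2 / (Real.pi ^ 2 * T) := by
    rw [hBdef]
    field_simp
  have e3 : (2 * (N:ℝ) + 1) * (j:ℝ) ^ 2 * θ ^ 2 * C ^ 2 / (Real.pi ^ 2 * T)
      ≤ 2 * (2 * (N:ℝ) + 1) * (j:ℝ) ^ 2 * θ ^ 2 * C ^ 2 / (Real.pi ^ 2 * T) := by
    gcongr ?_ / _
    nlinarith [sq_nonneg ((j:ℝ) * θ * C)]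
  have hfinal := mul_le_mul_of_nonneg_left hmain2 hT.le
  rw [mul_add, mul_add] at hfinal
  linarith [hfinal, e1.le, e2.le, e3]
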